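/- Let F be the distribution function of a probability measure on [0,∞) with F(0)=0, let Ψ_F be the compounding operator, and let g : [0,∞) → ℝ be measurable and locally bounded. Then for every fixed x ≥ 0 the map α ↦ u_{α,g}(x) is differentiable on (0,∞) and its derivative satisfies d/dα u_{α,g}(x) = (1/α²) · u_{α, u_{α,g}}(x), where u_{α, u_{α,g}} is the unique solution of v = α(u_{α,g} + Ψ_F v). -/

import Mathlib

open MeasureTheory Set Filter

/-- The compounding operator `Ψ_F` associated with the probability measure `μ` on `[0,∞)`
(whose distribution function is `F`, so that `F(0) = 0` reads `μ (Iic 0) = 0`):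
`(Ψ_F h)(x) = ∫₀ˣ (h(z) - ∫₀ᶻ h(z-y) dF(y)) dz`,
the inner integral being the Lebesgue–Stieltjes integral with respect to `F`. -/
noncomputable def Psi (μ : Measure ℝ) (h : ℝ → ℝ) : ℝ → ℝ :=
  fun x => ∫ z in (0:ℝ)..x, (h z - ∫ y in Icc (0:ℝ) z, h (z - y) ∂μ)

/-- `h : [0,∞) → ℝ` is locally bounded. -/
def LocBdd (h : ℝ → ℝ) : Prop :=
  ∀ x : ℝ, ∃ M : ℝ, ∀ z ∈ Icc (0:ℝ) x, |h z| ≤ M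

/-- `‖h‖_{[0,x]} = sup_{z ∈ [0,x]} |h z|`. -/
noncomputable def supNorm (h : ℝ → ℝ) (x : ℝ) : ℝ :=
  sSup ((fun z => |h z|) '' Icc (0:ℝ) x)

/-- for every fixed `x ≥ 0` the map `α ↦ u_{α,g}(x)` is differentiable on
`(0,∞)` with derivative `(1/α²) · u_{α,u_{α,g}}(x)`, where `u_{α,g}` denotes the (unique)
measurable locally bounded solution of `u = α(g + Ψ_F u)` and `u_{α,u_{α,g}}` the one of
`v = α(u_{α,g} + Ψ_F v)`. -/
noncomputable def innerI (μ : Measure ℝ) (h : ℝ → ℝ) (z : ℝ) : ℝ :=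
  ∫ y in Icc (0:ℝ) z, h (z - y) ∂μ

lemma measurable_innerI (μ : Measure ℝ) [IsProbabilityMeasure μ] {h : ℝ → ℝ}
    (hh : Measurable h) : Measurable (innerI μ h) := by
  have key : ∀ z, innerI μ h z
      = ∫ y, (Set.indicator {p : ℝ × ℝ | 0 ≤ p.2 ∧ p.2 ≤ p.1} (fun p => h (p.1 - p.2)) (z, y)) ∂μ := by
    intro z
    rw [innerI, ← integral_indicator measurableSet_Icc]
    apply integral_congr_ae
    filter_upwards with y
    by_cases hy : y ∈ Icc (0:ℝ) z
    · rw [indicator_of_mem hy, indicator_of_mem (by exact ⟨hy.1, hy.2⟩)]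
    · rw [indicator_of_notMem hy, indicator_of_notMem
        (by simpa [Icc, mem_setOf_eq] using hy)]
  rw [show innerI μ h = fun z => ∫ y, (Set.indicator {p : ℝ × ℝ | 0 ≤ p.2 ∧ p.2 ≤ p.1} (fun p => h (p.1 - p.2)) (z, y)) ∂μ from funext key]
  have hmeas : Measurable (Set.indicator {p : ℝ × ℝ | 0 ≤ p.2 ∧ p.2 ≤ p.1}
      (fun p : ℝ × ℝ => h (p.1 - p.2))) := by
    apply Measurable.indicator
    · exact hh.comp (measurable_fst.sub measurable_snd)
    · exact (measurableSet_le measurable_const measurable_snd).inter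
        (measurableSet_le measurable_snd measurable_fst)
  exact (hmeas.stronglyMeasurable.integral_prod_right').measurable

lemma abs_innerI_le (μ : Measure ℝ) [IsProbabilityMeasure μ] {h : ℝ → ℝ} {z B : ℝ}
    (hh : Measurable h)
    (hB : ∀ t ∈ Icc (0:ℝ) z, |h t| ≤ B) (hB0 : 0 ≤ B) : |innerI μ h z| ≤ B := by
  have hbd : ∀ y ∈ Icc (0:ℝ) z, ‖h (z - y)‖ ≤ B := by
    intro y hy
    rw [Real.norm_eq_abs]
    exact hB (z - y) ⟨by linarith [hy.1, hy.2], by linarith [hy.1]⟩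
  calc |innerI μ h z| = ‖∫ y in Icc (0:ℝ) z, h (z - y) ∂μ‖ := rfl
    _ ≤ B * (μ (Icc (0:ℝ) z)).toReal :=
        norm_setIntegral_le_of_norm_le_const (measure_lt_top μ _) hbd
    _ ≤ B * 1 := by
        apply mul_le_mul_of_nonneg_left _ hB0
        have h1 := prob_le_one (μ := μ) (s := Icc (0:ℝ) z)
        calc (μ (Icc (0:ℝ) z)).toReal ≤ (1 : ENNReal).toReal :=
              ENNReal.toReal_mono (by simp) h1
          _ = 1 := by simp
    _ = B := mul_one B

lemma integrableOn_shift (μ : Measure ℝ) [IsProbabilityMeasure μ] {h : ℝ → ℝ} {z B : ℝ}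
    (hh : Measurable h) (hB : ∀ t ∈ Icc (0:ℝ) z, |h t| ≤ B) :
    IntegrableOn (fun y => h (z - y)) (Icc (0:ℝ) z) μ := by
  apply Integrable.mono' (integrable_const B)
    ((hh.comp (measurable_const.sub measurable_id)).aestronglyMeasurable)
  rw [ae_restrict_iff' measurableSet_Icc]
  filter_upwards with y hy
  rw [Real.norm_eq_abs]
  exact hB (z - y) ⟨by linarith [hy.1, hy.2], by linarith [hy.1]⟩

lemma intervalIntegrable_core (μ : Measure ℝ) [IsProbabilityMeasure μ] {h : ℝ → ℝ} {x M : ℝ}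
    (hh : Measurable h) (hx : 0 ≤ x) (hM : ∀ t ∈ Icc (0:ℝ) x, |h t| ≤ M) :
    IntervalIntegrable (fun z => h z - innerI μ h z) volume 0 x := by
  have hM0 : 0 ≤ M := le_trans (abs_nonneg _) (hM 0 ⟨le_refl _, hx⟩)
  rw [intervalIntegrable_iff, uIoc_of_le hx]
  apply Integrable.mono' (integrable_const (M + M))
    ((hh.sub (measurable_innerI μ hh)).aestronglyMeasurable)
  rw [ae_restrict_iff' measurableSet_Ioc]
  filter_upwards with z hz
  have hz0 : (0:ℝ) ≤ z := le_of_lt hz.1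
  have h1 : |h z| ≤ M := hM z ⟨hz0, hz.2⟩
  have h2 : |innerI μ h z| ≤ M :=
    abs_innerI_le μ hh (fun t ht => hM t ⟨ht.1, le_trans ht.2 hz.2⟩) hM0
  rw [Real.norm_eq_abs]
  calc |h z - innerI μ h z| ≤ |h z| + |innerI μ h z| := abs_sub _ _
    _ ≤ M + M := add_le_add h1 h2

lemma Psi_eq_core (μ : Measure ℝ) (h : ℝ → ℝ) (x : ℝ) :
    Psi μ h x = ∫ z in (0:ℝ)..x, (h z - innerI μ h z) := rfl

lemma Psi_const_mul (μ : Measure ℝ) (h : ℝ → ℝ) (e x : ℝ) :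
    Psi μ (fun t => e * h t) x = e * Psi μ h x := by
  rw [Psi_eq_core, Psi_eq_core, ← intervalIntegral.integral_const_mul]
  apply intervalIntegral.integral_congr
  intro z _
  have : innerI μ (fun t => e * h t) z = e * innerI μ h z := by
    rw [innerI, innerI]
    exact integral_const_mul e _
  simp only [this]
  ring

lemma Psi_sub (μ : Measure ℝ) [IsProbabilityMeasure μ] {h1 h2 : ℝ → ℝ} {x : ℝ}
    (hh1 : Measurable h1) (hh2 : Measurable h2) (hb1 : LocBdd h1) (hb2 : LocBdd h2)
    (hx : 0 ≤ x) :
    Psi μ (fun t => h1 t - h2 t) x = Psi μ h1 x - Psi μ h2 x := by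
  obtain ⟨M1, hM1⟩ := hb1 x
  obtain ⟨M2, hM2⟩ := hb2 x
  rw [Psi_eq_core, Psi_eq_core, Psi_eq_core,
    ← intervalIntegral.integral_sub (intervalIntegrable_core μ hh1 hx hM1)
      (intervalIntegrable_core μ hh2 hx hM2)]
  apply intervalIntegral.integral_congr
  intro z hz
  rw [uIcc_of_le hx] at hz
  have : innerI μ (fun t => h1 t - h2 t) z = innerI μ h1 z - innerI μ h2 z := by
    rw [innerI, innerI, innerI]
    exact integral_sub
      (integrableOn_shift μ hh1 (fun t ht => hM1 t ⟨ht.1, le_trans ht.2 hz.2⟩))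
      (integrableOn_shift μ hh2 (fun t ht => hM2 t ⟨ht.1, le_trans ht.2 hz.2⟩))
  simp only [this]
  ring

lemma gronwall (μ : Measure ℝ) [IsProbabilityMeasure μ] {w r : ℝ → ℝ} (hw : Measurable w)
    {b x K R : ℝ} (hx : 0 ≤ x) (hR : 0 ≤ R)
    (hK : ∀ t ∈ Icc (0:ℝ) x, |w t| ≤ K)
    (heq : ∀ z ∈ Icc (0:ℝ) x, w z = b * Psi μ w z + r z)
    (hr : ∀ z ∈ Icc (0:ℝ) x, |r z| ≤ R) :
    |w x| ≤ R * Real.exp (2 * |b| * x) := by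
  have hxmem : x ∈ Icc (0:ℝ) x := ⟨hx, le_refl x⟩
  have hexp1 : (1:ℝ) ≤ Real.exp (2 * |b| * x) :=
    Real.one_le_exp (by positivity)
  rcases eq_or_ne b 0 with hb | hb
  · rw [heq x hxmem, hb]
    simp only [zero_mul, zero_add]
    calc |r x| ≤ R := hr x hxmem
      _ = R * 1 := (mul_one R).symm
      _ ≤ R * Real.exp (2 * |0| * x) := by
          apply mul_le_mul_of_nonneg_left _ hR
          simpa using Real.one_le_exp (by positivity : (0:ℝ) ≤ 2 * |(0:ℝ)| * x)
  · obtain ⟨c, hcdef⟩ : ∃ c : ℝ, c = 2 * |b| := ⟨_, rfl⟩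
    have hc : 0 < c := by
      have : 0 < |b| := abs_pos.2 hb
      rw [hcdef]; positivity
    have hK0 : 0 ≤ K := le_trans (abs_nonneg _) (hK 0 ⟨le_refl _, hx⟩)
    have main : ∀ n : ℕ, ∀ z ∈ Icc (0:ℝ) x,
        |w z| ≤ R * Real.exp (c * z) + K * (c * z) ^ n / n.factorial := by
      intro n
      induction n with
      | zero =>
        intro z hz
        have h1 : 0 ≤ R * Real.exp (c * z) := by positivity
        simpa using le_trans (hK z hz) (by nlinarith)
      | succ n ih =>
        intro z hz
        have hz0 : (0:ℝ) ≤ z := hz.1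
        have hfn : (0:ℝ) < n.factorial := by exact_mod_cast Nat.factorial_pos n
        set D : ℝ := 2 * K * c ^ n / n.factorial with hD
        have hD0 : 0 ≤ D := by positivity
        -- pointwise bound on the integrand of Psi μ w on (0, z]
        have hbound : ∀ s ∈ Set.uIoc (0:ℝ) z,
            ‖w s - innerI μ w s‖ ≤ 2 * R * Real.exp (c * s) + D * s ^ n := by
          intro s hs
          rw [uIoc_of_le hz0] at hs
          have hs0 : (0:ℝ) ≤ s := hs.1.le
          have hsx : s ≤ x := le_trans hs.2 hz.2
          set B : ℝ := R * Real.exp (c * s) + K * (c * s) ^ n / n.factorial with hB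
          have hB0 : 0 ≤ B := by positivity
          have hmon : ∀ t ∈ Icc (0:ℝ) s, |w t| ≤ B := by
            intro t ht
            refine le_trans (ih t ⟨ht.1, le_trans ht.2 hsx⟩) ?_
            have h1 : Real.exp (c * t) ≤ Real.exp (c * s) :=
              Real.exp_le_exp.2 (by nlinarith [ht.2, hc.le])
            have h2 : (c * t) ^ n ≤ (c * s) ^ n :=
              pow_le_pow_left₀ (mul_nonneg hc.le ht.1) (by nlinarith [ht.2, hc.le]) n
            rw [hB]
            gcongr
          have h1 : |w s| ≤ B := hmon s ⟨hs0, le_refl s⟩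
          have h2 : |innerI μ w s| ≤ B := abs_innerI_le μ hw hmon hB0
          have h3 : |w s - innerI μ w s| ≤ B + B :=
            le_trans (abs_sub _ _) (add_le_add h1 h2)
          rw [Real.norm_eq_abs]
          refine le_trans h3 (le_of_eq ?_)
          rw [hB, hD, mul_pow]
          field_simp
          ring
        have cont1 : Continuous fun s : ℝ => 2 * R * Real.exp (c * s) := by fun_prop
        have cont2 : Continuous fun s : ℝ => D * s ^ n := by fun_prop
        have hint : IntervalIntegrable (fun s => 2 * R * Real.exp (c * s) + D * s ^ n)
            volume 0 z :=
          (cont1.add cont2).intervalIntegrable 0 z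
        have hPsi : ‖Psi μ w z‖ ≤
            |∫ s in (0:ℝ)..z, (2 * R * Real.exp (c * s) + D * s ^ n)| := by
          rw [Psi_eq_core]
          exact intervalIntegral.norm_integral_le_abs_of_norm_le
            ((ae_restrict_mem measurableSet_uIoc).mono hbound) hint
        have Iexp : ∫ s in (0:ℝ)..z, Real.exp (c * s) = c⁻¹ * (Real.exp (c * z) - 1) := by
          rw [intervalIntegral.integral_comp_mul_left Real.exp hc.ne']
          simp [integral_exp]
        have hval : ∫ s in (0:ℝ)..z, (2 * R * Real.exp (c * s) + D * s ^ n)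
            = 2 * R * (c⁻¹ * (Real.exp (c * z) - 1)) + D * (z ^ (n + 1) / (n + 1)) := by
          rw [intervalIntegral.integral_add
              (cont1.intervalIntegrable 0 z) (cont2.intervalIntegrable 0 z),
            intervalIntegral.integral_const_mul, intervalIntegral.integral_const_mul,
            Iexp, integral_pow]
          simp
        have hposval : 0 ≤ 2 * R * (c⁻¹ * (Real.exp (c * z) - 1)) + D * (z ^ (n + 1) / (n + 1)) := by
          have : (1:ℝ) ≤ Real.exp (c * z) := Real.one_le_exp (by positivity)
          have h4 : (0:ℝ) ≤ Real.exp (c * z) - 1 := by linarith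
          positivity
        have hPsi2 : |Psi μ w z| ≤
            2 * R * (c⁻¹ * (Real.exp (c * z) - 1)) + D * (z ^ (n + 1) / (n + 1)) := by
          rw [← Real.norm_eq_abs]
          refine le_trans hPsi ?_
          rw [hval, abs_of_nonneg hposval]
        rw [heq z hz]
        have step1 : |b * Psi μ w z + r z| ≤ |b| * |Psi μ w z| + R := by
          refine le_trans (abs_add_le _ _) ?_
          rw [abs_mul]
          exact add_le_add_right (hr z hz) _
        refine le_trans step1 ?_
        have step2 : |b| * |Psi μ w z| + R ≤
            |b| * (2 * R * (c⁻¹ * (Real.exp (c * z) - 1)) + D * (z ^ (n + 1) / (n + 1))) + R := by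
          gcongr
        refine le_trans step2 (le_of_eq ?_)
        have hb2 : |b| = c / 2 := by rw [hcdef]; ring
        have hfact : ((n + 1).factorial : ℝ) = (n + 1) * n.factorial := by
          rw [Nat.factorial_succ]; push_cast; ring
        rw [hb2, hD, hfact, mul_pow]
        have hn1 : ((n:ℝ) + 1) ≠ 0 := by positivity
        field_simp
        ring
    have hlim : Tendsto (fun n : ℕ => R * Real.exp (c * x) + K * (c * x) ^ n / n.factorial)
        atTop (nhds (R * Real.exp (c * x))) := by
      have h1 : Tendsto (fun n : ℕ => ((c * x) ^ n / n.factorial : ℝ)) atTop (nhds 0) :=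
        FloorSemiring.tendsto_pow_div_factorial_atTop (c * x)
      have h2 : Tendsto (fun n : ℕ => R * Real.exp (c * x) + K * ((c * x) ^ n / n.factorial))
          atTop (nhds (R * Real.exp (c * x) + K * 0)) :=
        tendsto_const_nhds.add (h1.const_mul K)
      simp only [mul_zero, add_zero] at h2
      convert h2 using 2 with n
      ring
    have hfin := ge_of_tendsto' hlim (fun n => main n x hxmem)
    rwa [hcdef] at hfin

lemma LocBdd.sub' {h1 h2 : ℝ → ℝ} (hb1 : LocBdd h1) (hb2 : LocBdd h2) :
    LocBdd (fun t => h1 t - h2 t) := by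
  intro y
  obtain ⟨M1, hM1⟩ := hb1 y
  obtain ⟨M2, hM2⟩ := hb2 y
  exact ⟨M1 + M2, fun z hz =>
    le_trans (abs_sub _ _) (add_le_add (hM1 z hz) (hM2 z hz))⟩

lemma LocBdd.const_mul' {h : ℝ → ℝ} (hb : LocBdd h) (e : ℝ) :
    LocBdd (fun t => e * h t) := by
  intro y
  obtain ⟨M, hM⟩ := hb y
  exact ⟨|e| * M, fun z hz => by
    rw [abs_mul]
    exact mul_le_mul_of_nonneg_left (hM z hz) (abs_nonneg e)⟩

theorem solution_hasDerivAt (μ : Measure ℝ) [IsProbabilityMeasure μ]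
    (hμ0 : μ (Iic 0) = 0)
    (g : ℝ → ℝ) (hg : Measurable g) (hgb : LocBdd g)
    (u v : ℝ → ℝ → ℝ)
    (hu : ∀ a : ℝ, Measurable (u a) ∧ LocBdd (u a) ∧
      ∀ x ≥ (0:ℝ), u a x = a * (g x + Psi μ (u a) x))
    (hv : ∀ a : ℝ, Measurable (v a) ∧ LocBdd (v a) ∧
      ∀ x ≥ (0:ℝ), v a x = a * (u a x + Psi μ (v a) x)) :
    ∀ x ≥ (0:ℝ), ∀ a : ℝ, 0 < a →
      HasDerivAt (fun b => u b x) (1 / a ^ 2 * v a x) a := by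
  intro x hx a ha
  obtain ⟨hum, hub, hueq⟩ := hu a
  obtain ⟨hvm, hvb, hveq⟩ := hv a
  obtain ⟨Mv, hMv⟩ := hvb x
  have hMv0 : 0 ≤ Mv := le_trans (abs_nonneg _) (hMv 0 ⟨le_refl _, hx⟩)
  have ha0 : a ≠ 0 := ne_of_gt ha
  -- uniform bound on |Psi μ (v a)| on [0, x]
  have hPsiv : ∀ z ∈ Icc (0:ℝ) x, |Psi μ (v a) z| ≤ 2 * Mv * x := by
    intro z hz
    have hbd : ∀ s ∈ Set.uIoc (0:ℝ) z, ‖v a s - innerI μ (v a) s‖ ≤ Mv + Mv := by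
      intro s hs
      rw [uIoc_of_le hz.1] at hs
      have hs0 : (0:ℝ) ≤ s := hs.1.le
      have hsx : s ≤ x := le_trans hs.2 hz.2
      have h1 : |v a s| ≤ Mv := hMv s ⟨hs0, hsx⟩
      have h2 : |innerI μ (v a) s| ≤ Mv :=
        abs_innerI_le μ hvm (fun t ht => hMv t ⟨ht.1, le_trans ht.2 hsx⟩) hMv0
      rw [Real.norm_eq_abs]
      exact le_trans (abs_sub _ _) (add_le_add h1 h2)
    calc |Psi μ (v a) z| = ‖∫ s in (0:ℝ)..z, (v a s - innerI μ (v a) s)‖ := by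
          rw [Psi_eq_core, Real.norm_eq_abs]
      _ ≤ (Mv + Mv) * |z - 0| := intervalIntegral.norm_integral_le_of_norm_le_const hbd
      _ ≤ 2 * Mv * x := by
          rw [sub_zero, abs_of_nonneg hz.1]
          nlinarith [hz.2, hz.1]
  set C := (2 * Mv * x / a ^ 2) * Real.exp (2 * (|a| + 1) * x) + 1 with hC
  have hC0 : 0 < C := by positivity
  have claim : ∀ b : ℝ, |b - a| ≤ 1 →
      |u b x - u a x - (b - a) * (1 / a ^ 2 * v a x)| ≤ C * (b - a) ^ 2 := by
    intro b hb1
    obtain ⟨hubm, hubb, hubeq⟩ := hu b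
    set e := (b - a) / a ^ 2 with he
    set w : ℝ → ℝ := fun t => u b t - u a t - e * v a t with hw
    have hwm : Measurable w := (hubm.sub hum).sub (hvm.const_mul e)
    obtain ⟨M1, hM1⟩ := hubb x
    obtain ⟨M2, hM2⟩ := hub x
    have hK : ∀ t ∈ Icc (0:ℝ) x, |w t| ≤ M1 + M2 + |e| * Mv := by
      intro t ht
      rw [hw]
      calc |u b t - u a t - e * v a t| ≤ |u b t - u a t| + |e * v a t| := abs_sub _ _
        _ ≤ (|u b t| + |u a t|) + |e| * Mv := by
            refine add_le_add (abs_sub _ _) ?_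
            rw [abs_mul]
            exact mul_le_mul_of_nonneg_left (hMv t ht) (abs_nonneg e)
        _ ≤ M1 + M2 + |e| * Mv :=
            add_le_add_left (add_le_add (hM1 t ht) (hM2 t ht)) _
    have heqw : ∀ z ∈ Icc (0:ℝ) x,
        w z = b * Psi μ w z + ((b - a) ^ 2 / a ^ 2) * Psi μ (v a) z := by
      intro z hz
      have hz0 : (0:ℝ) ≤ z := hz.1
      have hPw : Psi μ w z
          = Psi μ (u b) z - Psi μ (u a) z - e * Psi μ (v a) z := by
        have h1 : Psi μ w z = Psi μ (fun t => u b t - u a t) z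
            - Psi μ (fun t => e * v a t) z :=
          Psi_sub μ (hubm.sub hum) (hvm.const_mul e) (LocBdd.sub' hubb hub)
            (LocBdd.const_mul' hvb e) hz0
        rw [h1, Psi_sub μ hubm hum hubb hub hz0, Psi_const_mul]
      have e1 : u a z = a * (g z + Psi μ (u a) z) := hueq z hz0
      have e2 : u b z = b * (g z + Psi μ (u b) z) := hubeq z hz0
      have e3 : v a z = a * (u a z + Psi μ (v a) z) := hveq z hz0
      rw [hw]
      simp only []
      rw [hPw, e2, e3, e1, he]
      field_simp
      ring
    have hr : ∀ z ∈ Icc (0:ℝ) x,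
        |((b - a) ^ 2 / a ^ 2) * Psi μ (v a) z| ≤ ((b - a) ^ 2 / a ^ 2) * (2 * Mv * x) := by
      intro z hz
      rw [abs_mul, abs_of_nonneg (by positivity : (0:ℝ) ≤ (b - a) ^ 2 / a ^ 2)]
      exact mul_le_mul_of_nonneg_left (hPsiv z hz) (by positivity)
    have hgr := gronwall μ hwm hx (by positivity : (0:ℝ) ≤ (b - a) ^ 2 / a ^ 2 * (2 * Mv * x))
      hK heqw hr
    have hbb : |b| ≤ |a| + 1 := by
      calc |b| = |a + (b - a)| := by ring_nf
        _ ≤ |a| + |b - a| := abs_add_le _ _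
        _ ≤ |a| + 1 := add_le_add_right hb1 _
    have hexp : Real.exp (2 * |b| * x) ≤ Real.exp (2 * (|a| + 1) * x) :=
      Real.exp_le_exp.2 (by nlinarith [abs_nonneg b])
    calc |u b x - u a x - (b - a) * (1 / a ^ 2 * v a x)|
        = |w x| := by
          rw [hw]
          simp only []
          congr 1
          rw [he]
          ring
      _ ≤ ((b - a) ^ 2 / a ^ 2) * (2 * Mv * x) * Real.exp (2 * |b| * x) := hgr
      _ ≤ C * (b - a) ^ 2 := by
          rw [hC]
          have h := mul_le_mul_of_nonneg_left hexp
            (by positivity : (0:ℝ) ≤ (b - a) ^ 2 / a ^ 2 * (2 * Mv * x))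
          refine le_trans h ?_
          have hsq : (0:ℝ) ≤ (b - a) ^ 2 := sq_nonneg _
          have hid : (2 * Mv * x / a ^ 2 * Real.exp (2 * (|a| + 1) * x) + 1) * (b - a) ^ 2
              = (b - a) ^ 2 / a ^ 2 * (2 * Mv * x) * Real.exp (2 * (|a| + 1) * x)
                + (b - a) ^ 2 := by ring
          linarith [hsq, hid.ge]
  rw [hasDerivAt_iff_isLittleO, Asymptotics.isLittleO_iff]
  intro ε hε
  have hδ : (0:ℝ) < min 1 (ε / C) := lt_min one_pos (by positivity)
  have hev : ∀ᶠ b in nhds a, b ∈ Metric.closedBall a (min 1 (ε / C)) :=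
    Metric.closedBall_mem_nhds a hδ
  filter_upwards [hev] with b hbd
  rw [Metric.mem_closedBall, Real.dist_eq] at hbd
  have h1 : |b - a| ≤ 1 := le_trans hbd (min_le_left _ _)
  have h2 : |b - a| ≤ ε / C := le_trans hbd (min_le_right _ _)
  have hcl := claim b h1
  rw [smul_eq_mul, Real.norm_eq_abs, Real.norm_eq_abs]
  calc |u b x - u a x - (b - a) * (1 / a ^ 2 * v a x)| ≤ C * (b - a) ^ 2 := hcl
    _ = C * |b - a| * |b - a| := by rw [← sq_abs]; ring
    _ ≤ ε * |b - a| := by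
        apply mul_le_mul_of_nonneg_right _ (abs_nonneg _)
        calc C * |b - a| ≤ C * (ε / C) := mul_le_mul_of_nonneg_left h2 hC0.le
          _ = ε := by field_simp
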